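/- arXiv:2305.06872 — 3 statements merged into one kernel-verified Lean document; each statement's English description precedes it below -/
import Mathlib

section
/- The function ψ̃(y) := y⁴/12 − y²/2 + log(cosh y) is nonnegative on ℝ, with ψ̃(y) = 0 if and only if y = 0. -/
open Real

private lemma sinh_lt_mul_cosh {y : ℝ} (hy : 0 < y) : Real.sinh y < y * Real.cosh y := by
  have hmono : StrictMonoOn (fun y : ℝ => y * Real.cosh y - Real.sinh y) (Set.Ici 0) := by
    apply strictMonoOn_of_deriv_pos (convex_Ici 0)
    · exact (Continuous.mul continuous_id Real.continuous_cosh).sub Real.continuous_sinh |>.continuousOn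
    · intro x hx
      rw [interior_Ici] at hx
      have hd : HasDerivAt (fun y : ℝ => y * Real.cosh y - Real.sinh y)
          (1 * Real.cosh x + x * Real.sinh x - Real.cosh x) x :=
        ((hasDerivAt_id x).mul (Real.hasDerivAt_cosh x)).sub (Real.hasDerivAt_sinh x)
      rw [hd.deriv]
      have hx' : (0:ℝ) < x := hx
      have := Real.sinh_pos_iff.mpr hx'
      nlinarith [mul_pos hx' this]
  have := hmono (Set.self_mem_Ici) (le_of_lt hy : (0:ℝ) ≤ y) hy
  simpa using this

private lemma key_pos {y : ℝ} (hy : 0 < y) :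
    0 < Real.sinh y - (y - y ^ 3 / 3) * Real.cosh y := by
  have hmono : StrictMonoOn (fun y : ℝ => Real.sinh y - (y - y ^ 3 / 3) * Real.cosh y)
      (Set.Ici 0) := by
    apply strictMonoOn_of_deriv_pos (convex_Ici 0)
    · exact Real.continuous_sinh.sub
        ((continuous_id.sub ((continuous_pow 3).div_const 3)).mul Real.continuous_cosh) |>.continuousOn
    · intro x hx
      rw [interior_Ici] at hx
      have hd : HasDerivAt (fun y : ℝ => Real.sinh y - (y - y ^ 3 / 3) * Real.cosh y)
          (Real.cosh x - ((1 - 3 * x ^ 2 / 3) * Real.cosh x + (x - x ^ 3 / 3) * Real.sinh x)) x := by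
        apply (Real.hasDerivAt_sinh x).sub
        apply HasDerivAt.mul _ (Real.hasDerivAt_cosh x)
        simpa using (hasDerivAt_id' x).fun_sub (((hasDerivAt_pow 3 x)).div_const 3)
      rw [hd.deriv]
      have h1 := sinh_lt_mul_cosh hx
      have h2 := Real.sinh_pos_iff.mpr hx
      have h3 := Real.cosh_pos (x := x)
      nlinarith [mul_pos hx h2, mul_pos (mul_pos hx hx) h2]
  have := hmono Set.self_mem_Ici (le_of_lt hy : (0:ℝ) ≤ y) hy
  simpa using this

theorem psiTilde_nonneg_and_eq_zero_iff (ψ : ℝ → ℝ)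
    (hψ : ∀ y, ψ y = y ^ 4 / 12 - y ^ 2 / 2 + Real.log (Real.cosh y)) :
    (∀ y, 0 ≤ ψ y) ∧ (∀ y, ψ y = 0 ↔ y = 0) := by
  set F : ℝ → ℝ := fun y => y ^ 4 / 12 - y ^ 2 / 2 + Real.log (Real.cosh y) with hF
  have hF0 : F 0 = 0 := by simp [hF]
  have hFeven : ∀ y, F (-y) = F y := by
    intro y; simp only [hF, Real.cosh_neg]; ring_nf
  have hmono : StrictMonoOn F (Set.Ici 0) := by
    apply strictMonoOn_of_deriv_pos (convex_Ici 0)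
    · apply Continuous.continuousOn
      apply Continuous.add
      · exact ((continuous_pow 4).div_const 12).sub ((continuous_pow 2).div_const 2)
      · exact Real.continuous_cosh.log (fun x => (Real.cosh_pos x).ne')
    · intro x hx
      rw [interior_Ici] at hx
      have hc := Real.cosh_pos (x := x)
      have hd : HasDerivAt F (4 * x ^ 3 / 12 - 2 * x ^ 1 / 2 + Real.sinh x / Real.cosh x) x := by
        apply HasDerivAt.add
        · exact ((hasDerivAt_pow 4 x).div_const 12).sub ((hasDerivAt_pow 2 x).div_const 2)
        · exact (Real.hasDerivAt_cosh x).log hc.ne'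
      rw [hd.deriv]
      have hkey := key_pos hx
      have h2 : x - x ^ 3 / 3 < Real.sinh x / Real.cosh x := (lt_div_iff₀ hc).mpr (by linarith)
      linarith
  have hpos : ∀ y, 0 < y → 0 < F y := fun y hy => by
    have := hmono Set.self_mem_Ici (le_of_lt hy) hy
    rwa [hF0] at this
  have hposall : ∀ y, y ≠ 0 → 0 < F y := by
    intro y hy
    rcases lt_or_gt_of_ne hy with h | h
    · have := hpos (-y) (by linarith)
      rwa [hFeven] at this
    · exact hpos y h
  constructor
  · intro y
    rw [hψ]
    rcases eq_or_ne y 0 with rfl | h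
    · norm_num
    · exact (hposall y h).le
  · intro y
    rw [hψ]
    constructor
    · intro h
      by_contra hy
      exact (hposall y hy).ne' h
    · rintro rfl; norm_num
end

section
/- Let β > 1 and define φ_β(u) := u²/(2β) − log(cosh u). Then a point u > 0 is a critical point of φ_β on (0,∞) if and only if tanh(u) = u/β, and at this unique positive critical point x_β one has φ_β''(x_β) > 0 and x_β is the global minimum of φ_β on [0,∞). -/
theorem phi_beta_critical_point (β : ℝ) (hβ : 1 < β) (φ : ℝ → ℝ)
    (hφ : ∀ u, φ u = u ^ 2 / (2 * β) - Real.log (Real.cosh u)) :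
    (∀ u : ℝ, 0 < u → (deriv φ u = 0 ↔ Real.tanh u = u / β)) ∧
      ∀ x : ℝ, 0 < x → Real.tanh x = x / β →
        (∀ x' : ℝ, 0 < x' → Real.tanh x' = x' / β → x' = x) ∧
        0 < deriv (deriv φ) x ∧
        ∀ u ∈ Set.Ici (0 : ℝ), φ x ≤ φ u := by
  have hβ0 : (0:ℝ) < β := lt_trans one_pos hβ
  have hφf : φ = fun u => u ^ 2 / (2 * β) - Real.log (Real.cosh u) := funext hφ
  subst hφf
  -- first derivative
  have hder : ∀ u : ℝ,
      HasDerivAt (fun u => u ^ 2 / (2 * β) - Real.log (Real.cosh u))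
        (u / β - Real.tanh u) u := by
    intro u
    have h1 : HasDerivAt (fun u : ℝ => u ^ 2 / (2 * β)) (u / β) u := by
      have := (hasDerivAt_pow 2 u).div_const (2 * β)
      refine this.congr_deriv ?_; symm
      field_simp
      ring
    have h2 : HasDerivAt (fun u : ℝ => Real.log (Real.cosh u)) (Real.tanh u) u := by
      have hc := Real.hasDerivAt_cosh u
      have := (Real.hasDerivAt_log (Real.cosh_pos (x := u)).ne').comp u hc
      refine this.congr_deriv ?_; symm
      rw [Real.tanh_eq_sinh_div_cosh]
      field_simp
    exact h1.sub h2
  have hd1 : deriv (fun u => u ^ 2 / (2 * β) - Real.log (Real.cosh u))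
      = fun u => u / β - Real.tanh u := funext fun u => (hder u).deriv
  -- the auxiliary function r u = u * cosh u / sinh u is strictly monotone on (0,∞)
  have hr : StrictMonoOn (fun u => u * Real.cosh u / Real.sinh u) (Set.Ioi 0) := by
    apply strictMonoOn_of_deriv_pos (convex_Ioi 0)
    · apply ContinuousOn.div
      · fun_prop
      · fun_prop
      · intro u hu
        exact (Real.sinh_pos_iff.mpr hu).ne'
    · rw [interior_Ioi]
      intro u hu
      have hu' : (0:ℝ) < u := hu
      have hs : 0 < Real.sinh u := Real.sinh_pos_iff.mpr hu'
      have hD : HasDerivAt (fun u => u * Real.cosh u / Real.sinh u)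
          ((Real.sinh u * Real.cosh u - u) / Real.sinh u ^ 2) u := by
        have h1 : HasDerivAt (fun u : ℝ => u * Real.cosh u)
            (1 * Real.cosh u + u * Real.sinh u) u :=
          (hasDerivAt_id u).mul (Real.hasDerivAt_cosh u)
        have := h1.div (Real.hasDerivAt_sinh u) hs.ne'
        refine this.congr_deriv ?_; symm
        have hc := Real.cosh_sq_sub_sinh_sq u
        field_simp
        nlinarith [hc, congrArg (fun t => t * u) hc]
      rw [hD.deriv]
      apply div_pos
      · have h1 := Real.self_lt_sinh_iff.mpr hu'
        have h2 := Real.one_le_cosh u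
        nlinarith
      · positivity
  -- sign of deriv φ off the critical point
  have key : ∀ x : ℝ, 0 < x → Real.tanh x = x / β →
      β * Real.sinh x = x * Real.cosh x := by
    intro x hx htx
    have hs : 0 < Real.sinh x := Real.sinh_pos_iff.mpr hx
    have hc : 0 < Real.cosh x := Real.cosh_pos x
    rw [Real.tanh_eq_sinh_div_cosh] at htx
    field_simp at htx
    linarith
  constructor
  · intro u hu
    rw [hd1]
    constructor
    · intro h
      have : u / β - Real.tanh u = 0 := h
      linarith [sub_eq_zero.mp this]
    · intro h
      simp only []
      rw [h]
      ring
  · intro x hx htx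
    have hsx : 0 < Real.sinh x := Real.sinh_pos_iff.mpr hx
    have hcx : 0 < Real.cosh x := Real.cosh_pos x
    have hβs := key x hx htx
    have hrx : (fun u => u * Real.cosh u / Real.sinh u) x = β := by
      field_simp
      linarith
    refine ⟨?_, ?_, ?_⟩
    · -- uniqueness
      intro x' hx' htx'
      have hsx' : 0 < Real.sinh x' := Real.sinh_pos_iff.mpr hx'
      have hβs' := key x' hx' htx'
      have hrx' : (fun u => u * Real.cosh u / Real.sinh u) x' = β := by
        field_simp
        linarith
      exact hr.injOn (Set.mem_Ioi.mpr hx') (Set.mem_Ioi.mpr hx) (hrx'.trans hrx.symm)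
    · -- second derivative positivity
      rw [hd1]
      have hD2 : HasDerivAt (fun u => u / β - Real.tanh u)
          (1 / β - 1 / Real.cosh x ^ 2) x := by
        have h1 : HasDerivAt (fun u : ℝ => u / β) (1 / β) x := by
          simpa using (hasDerivAt_id x).div_const β
        have h2 : HasDerivAt Real.tanh (1 / Real.cosh x ^ 2) x := by
          have htanh : Real.tanh = fun u => Real.sinh u / Real.cosh u :=
            funext fun u => Real.tanh_eq_sinh_div_cosh u
          rw [htanh]
          have := (Real.hasDerivAt_sinh x).div (Real.hasDerivAt_cosh x)
            (Real.cosh_pos (x := x)).ne'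
          refine this.congr_deriv ?_; symm
          have hc := Real.cosh_sq_sub_sinh_sq x
          field_simp
          nlinarith [hc]
        exact h1.sub h2
      rw [hD2.deriv]
      have hcs : β < Real.cosh x ^ 2 := by
        have h1 := Real.self_lt_sinh_iff.mpr hx
        have h2 := Real.one_le_cosh x
        have h3 : x < Real.sinh x * Real.cosh x := by nlinarith
        have h4 : β * Real.sinh x < Real.cosh x ^ 2 * Real.sinh x := by nlinarith
        exact lt_of_mul_lt_mul_right (by linarith) hsx.le
      have : 1 / Real.cosh x ^ 2 < 1 / β := by
        apply one_div_lt_one_div_of_lt hβ0 hcs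
      linarith
    · -- global minimum
      intro u hu
      rcases le_or_gt u x with hux | hux
      · have hanti : AntitoneOn (fun u => u ^ 2 / (2 * β) - Real.log (Real.cosh u))
            (Set.Icc 0 x) := by
          apply antitoneOn_of_deriv_nonpos (convex_Icc 0 x)
          · exact Continuous.continuousOn (by
              apply continuous_iff_continuousAt.mpr
              exact fun u => (hder u).continuousAt)
          · intro v hv
            exact ((hder v).differentiableAt).differentiableWithinAt
          · intro v hv
            rw [interior_Icc] at hv
            obtain ⟨hv0, hvx⟩ := hv
            rw [hd1]
            have hrv : (fun u => u * Real.cosh u / Real.sinh u) v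
                < (fun u => u * Real.cosh u / Real.sinh u) x :=
              hr (Set.mem_Ioi.mpr hv0) (Set.mem_Ioi.mpr hx) hvx
            rw [hrx] at hrv
            have hsv : 0 < Real.sinh v := Real.sinh_pos_iff.mpr hv0
            have hcv : 0 < Real.cosh v := Real.cosh_pos v
            have : v * Real.cosh v < β * Real.sinh v := by
              rw [div_lt_iff₀ hsv] at hrv
              linarith
            have htv : v / β < Real.tanh v := by
              rw [Real.tanh_eq_sinh_div_cosh, div_lt_div_iff₀ hβ0 hcv]
              linarith
            simp only []
            linarith
        exact hanti ⟨hu, hux⟩ ⟨le_of_lt hx, le_refl x⟩ hux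
      · have hmono : MonotoneOn (fun u => u ^ 2 / (2 * β) - Real.log (Real.cosh u))
            (Set.Ici x) := by
          apply monotoneOn_of_deriv_nonneg (convex_Ici x)
          · exact Continuous.continuousOn (by
              apply continuous_iff_continuousAt.mpr
              exact fun u => (hder u).continuousAt)
          · intro v hv
            exact ((hder v).differentiableAt).differentiableWithinAt
          · intro v hv
            rw [interior_Ici] at hv
            have hvx : x < v := hv
            have hv0 : 0 < v := lt_trans hx hvx
            rw [hd1]
            have hrv : (fun u => u * Real.cosh u / Real.sinh u) x
                < (fun u => u * Real.cosh u / Real.sinh u) v :=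
              hr (Set.mem_Ioi.mpr hx) (Set.mem_Ioi.mpr hv0) hvx
            rw [hrx] at hrv
            have hsv : 0 < Real.sinh v := Real.sinh_pos_iff.mpr hv0
            have hcv : 0 < Real.cosh v := Real.cosh_pos v
            have : β * Real.sinh v < v * Real.cosh v := by
              rw [lt_div_iff₀ hsv] at hrv
              linarith
            have htv : Real.tanh v < v / β := by
              rw [Real.tanh_eq_sinh_div_cosh, div_lt_div_iff₀ hcv hβ0]
              linarith
            simp only []
            linarith
        exact hmono (Set.mem_Ici.mpr (le_refl x)) (Set.mem_Ici.mpr (le_of_lt hux))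
          (le_of_lt hux)
end

section
/- For two centered Gaussian random variables G_p ∼ N(0, σ_p²) and G_q ∼ N(0, σ_q²) with σ_p, σ_q > 0, the Kolmogorov distance satisfies sup_{w∈ℝ} |P(G_p ≤ w) − P(G_q ≤ w)| ≤ |1 − σ_q²/σ_p²|. -/
open MeasureTheory ProbabilityTheory Real Set
open scoped NNReal ENNReal

lemma continuous_gauss01 : Continuous (gaussianPDFReal 0 1) := by
  unfold gaussianPDFReal
  fun_prop

noncomputable def stdPhi (t : ℝ) : ℝ := ((gaussianReal 0 1) (Set.Iic t)).toReal

lemma stdPhi_eq_integral (t : ℝ) :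
    stdPhi t = ∫ x in Set.Iic t, gaussianPDFReal 0 1 x := by
  rw [stdPhi, gaussianReal_apply_eq_integral 0 one_ne_zero,
    ENNReal.toReal_ofReal (setIntegral_nonneg measurableSet_Iic
      (fun x _ => gaussianPDFReal_nonneg 0 1 x))]

lemma stdPhi_integrableOn (t : ℝ) : IntegrableOn (gaussianPDFReal 0 1) (Set.Iic t) :=
  (integrable_gaussianPDFReal 0 1).integrableOn

lemma stdPhi_hasDerivAt (t : ℝ) : HasDerivAt stdPhi (gaussianPDFReal 0 1 t) t := by
  have h : ∀ u : ℝ, stdPhi u = stdPhi 0 + ∫ x in (0:ℝ)..u, gaussianPDFReal 0 1 x := by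
    intro u
    rw [stdPhi_eq_integral, stdPhi_eq_integral,
      ← intervalIntegral.integral_Iic_sub_Iic (stdPhi_integrableOn 0) (stdPhi_integrableOn u)]
    ring
  have hd : HasDerivAt (fun u => stdPhi 0 + ∫ x in (0:ℝ)..u, gaussianPDFReal 0 1 x)
      (gaussianPDFReal 0 1 t) t := by
    refine HasDerivAt.const_add _ ?_
    exact intervalIntegral.integral_hasDerivAt_right
      ((integrable_gaussianPDFReal 0 1).intervalIntegrable)
      ((stronglyMeasurable_gaussianPDFReal 0 1).stronglyMeasurableAtFilter)
      (continuous_gauss01.continuousAt)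
  have : stdPhi = fun u => stdPhi 0 + ∫ x in (0:ℝ)..u, gaussianPDFReal 0 1 x := funext h
  rw [this]
  exact hd

lemma stdPhi_zero : stdPhi 0 = 1/2 := by
  have heven : ∀ x : ℝ, gaussianPDFReal 0 1 (-x) = gaussianPDFReal 0 1 x := by
    intro x; simp [gaussianPDFReal]
  have h1 : (∫ x in Set.Iic (0:ℝ), gaussianPDFReal 0 1 x)
      + ∫ x in Set.Ioi (0:ℝ), gaussianPDFReal 0 1 x = 1 := by
    rw [intervalIntegral.integral_Iic_add_Ioi (stdPhi_integrableOn 0)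
      (integrable_gaussianPDFReal 0 1).integrableOn]
    exact integral_gaussianPDFReal_eq_one 0 one_ne_zero
  have h2 : (∫ x in Set.Ioi (0:ℝ), gaussianPDFReal 0 1 x)
      = ∫ x in Set.Iic (0:ℝ), gaussianPDFReal 0 1 x := by
    have := integral_comp_neg_Iic (0:ℝ) (gaussianPDFReal 0 1)
    simp only [heven, neg_zero] at this
    rw [← this]
  rw [stdPhi_eq_integral]
  linarith [h1, h2]

lemma stdPhi_nonneg (t : ℝ) : 0 ≤ stdPhi t := ENNReal.toReal_nonneg

lemma stdPhi_le_one (t : ℝ) : stdPhi t ≤ 1 := by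
  have h : (gaussianReal 0 1) (Set.Iic t) ≤ 1 := prob_le_one
  have := ENNReal.toReal_mono ENNReal.one_ne_top h
  simpa [stdPhi] using this

lemma stdPhi_mono : Monotone stdPhi := by
  intro a b hab
  exact ENNReal.toReal_mono (measure_ne_top _ _)
    (measure_mono (Set.Iic_subset_Iic.mpr hab))

lemma gauss_Iic_toReal (σ w : ℝ) (hσ : 0 < σ) :
    ((gaussianReal 0 (Real.toNNReal (σ^2))) (Set.Iic w)).toReal = stdPhi (w / σ) := by
  have hv : (⟨σ^2, sq_nonneg σ⟩ : ℝ≥0) * 1 = Real.toNNReal (σ^2) := by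
    rw [mul_one]
    exact NNReal.coe_injective (by simp [Real.coe_toNNReal _ (sq_nonneg σ)]; rfl)
  have hmap := gaussianReal_map_const_mul (μ := 0) (v := 1) σ
  rw [mul_zero, show NNReal.mk (σ^2) (sq_nonneg σ) * 1 = _ from hv] at hmap
  rw [← hmap, Measure.map_apply (measurable_const_mul σ) measurableSet_Iic]
  have hpre : (fun x => σ * x) ⁻¹' Set.Iic w = Set.Iic (w/σ) := by
    ext y
    simp only [Set.mem_preimage, Set.mem_Iic]
    rw [mul_comm, ← le_div_iff₀ hσ]
  rw [hpre, stdPhi]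

lemma gauss01_eval (t : ℝ) : gaussianPDFReal 0 1 t = (Real.sqrt (2*π))⁻¹ * rexp (-t^2/2) := by
  simp [gaussianPDFReal]

lemma pdf_mul_abs_le (t : ℝ) : gaussianPDFReal 0 1 t * |t| ≤ 1/4 := by
  rw [gauss01_eval]
  have h1 : |t| * rexp (-t^2/2) ≤ rexp (-1/2) := by
    have habs : |t| ≤ (t^2+1)/2 := by nlinarith [sq_abs t, sq_nonneg (|t|-1)]
    have hexp : (t^2+1)/2 ≤ rexp ((t^2-1)/2) := by
      have := Real.add_one_le_exp ((t^2-1)/2)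
      linarith
    calc |t| * rexp (-t^2/2) ≤ rexp ((t^2-1)/2) * rexp (-t^2/2) :=
          mul_le_mul_of_nonneg_right (habs.trans hexp) (Real.exp_nonneg _)
      _ = rexp (-1/2) := by rw [← Real.exp_add]; ring_nf
  have h2 : (Real.sqrt (2*π))⁻¹ * rexp (-1/2) ≤ 1/4 := by
    have hπ : (3.141592 : ℝ) < π := Real.pi_gt_d6
    have he : (2.7182818283 : ℝ) < rexp 1 := Real.exp_one_gt_d9
    have hs : (0:ℝ) < Real.sqrt (2*π) := Real.sqrt_pos.mpr (by positivity)
    have hsq : ((Real.sqrt (2*π))⁻¹ * rexp (-1/2))^2 = (2*π)⁻¹ * rexp (-1) := by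
      rw [mul_pow, ← Real.exp_nat_mul]
      rw [inv_pow, Real.sq_sqrt (by positivity)]
      norm_num
    have hle : (2*π)⁻¹ * rexp (-1) ≤ 1/16 := by
      rw [Real.exp_neg]
      rw [inv_mul_le_iff₀ (by positivity)]
      rw [inv_le_iff_one_le_mul₀ (by positivity)]
      nlinarith [Real.exp_pos 1]
    nlinarith [mul_pos (inv_pos.mpr hs) (Real.exp_pos (-1/2 : ℝ))]
  calc (Real.sqrt (2*π))⁻¹ * rexp (-t^2/2) * |t|
      = (Real.sqrt (2*π))⁻¹ * (|t| * rexp (-t^2/2)) := by ring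
    _ ≤ (Real.sqrt (2*π))⁻¹ * rexp (-1/2) := by
        exact mul_le_mul_of_nonneg_left h1 (by positivity)
    _ ≤ 1/4 := h2

noncomputable def Fderiv (w σp z : ℝ) : ℝ :=
  -(gaussianPDFReal 0 1 (w/(σp*Real.sqrt z)) * (w/(σp*Real.sqrt z)) / (2*z))

lemma F_hasDerivAt (w σp : ℝ) (hσp : 0 < σp) {z : ℝ} (hz : 0 < z) :
    HasDerivAt (fun s => stdPhi (w/(σp*Real.sqrt s))) (Fderiv w σp z) z := by
  have hsz : 0 < Real.sqrt z := Real.sqrt_pos.mpr hz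
  have hu : HasDerivAt (fun s : ℝ => w/(σp*Real.sqrt s))
      (w/σp * (-(1/(2*Real.sqrt z)) / (Real.sqrt z)^2)) z := by
    have h1 : HasDerivAt Real.sqrt (1/(2*Real.sqrt z)) z := Real.hasDerivAt_sqrt hz.ne'
    have h2 := (h1.inv hsz.ne').const_mul (w/σp)
    have hfe : (fun s : ℝ => w/(σp*Real.sqrt s)) = fun s : ℝ => w/σp * (Real.sqrt s)⁻¹ := by
      ext s
      rw [div_mul_eq_div_div, div_eq_mul_inv]
    rw [hfe]
    exact h2
  have hc := (stdPhi_hasDerivAt (w/(σp*Real.sqrt z))).comp z hu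
  have heq : Fderiv w σp z
      = gaussianPDFReal 0 1 (w/(σp*Real.sqrt z)) * (w/σp * (-(1/(2*Real.sqrt z)) / (Real.sqrt z)^2)) := by
    rw [Fderiv, Real.sq_sqrt hz.le]
    field_simp
    try exact Or.inl trivial
  rw [heq]
  exact hc

lemma Fderiv_abs_le (w σp : ℝ) (hσp : 0 < σp) {z : ℝ} (hz : 1/8 ≤ z) :
    |Fderiv w σp z| ≤ 1 := by
  have hz0 : 0 < z := lt_of_lt_of_le (by norm_num) hz
  set t := w/(σp*Real.sqrt z)
  have hpdf : 0 ≤ gaussianPDFReal 0 1 t := gaussianPDFReal_nonneg 0 1 t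
  have h := pdf_mul_abs_le t
  rw [Fderiv, abs_neg, abs_div, abs_mul, abs_of_nonneg hpdf,
    abs_of_pos (by positivity : (0:ℝ) < 2*z), div_le_one (by positivity)]
  nlinarith

lemma abs_stdPhi_sub_le_half {u v : ℝ} (huv : (0 ≤ u ∧ 0 ≤ v) ∨ (u ≤ 0 ∧ v ≤ 0)) :
    |stdPhi u - stdPhi v| ≤ 1/2 := by
  rcases huv with ⟨hu, hv⟩ | ⟨hu, hv⟩
  · have h1 := stdPhi_mono hu
    have h2 := stdPhi_mono hv
    rw [stdPhi_zero] at h1 h2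
    have := stdPhi_le_one u
    have := stdPhi_le_one v
    rw [abs_le]; constructor <;> linarith
  · have h1 := stdPhi_mono hu
    have h2 := stdPhi_mono hv
    rw [stdPhi_zero] at h1 h2
    have := stdPhi_nonneg u
    have := stdPhi_nonneg v
    rw [abs_le]; constructor <;> linarith

theorem kolmogorov_dist_gaussians_le (σp σq : ℝ) (hσp : 0 < σp) (hσq : 0 < σq) :
    (⨆ w : ℝ,
        |((gaussianReal 0 (Real.toNNReal (σp ^ 2))) (Set.Iic w)).toReal -
          ((gaussianReal 0 (Real.toNNReal (σq ^ 2))) (Set.Iic w)).toReal|) ≤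
      |1 - σq ^ 2 / σp ^ 2| := by
  set x := σq^2/σp^2 with hxdef
  have hx0 : 0 < x := by positivity
  refine ciSup_le fun w => ?_
  rw [gauss_Iic_toReal σp w hσp, gauss_Iic_toReal σq w hσq]
  by_cases hcase : 1/8 ≤ x
  · -- MVT case
    have hsub : Set.Icc (min x 1) (max x 1) ⊆ Set.Ici (1/8 : ℝ) := by
      intro z hz
      have := hz.1
      have : (1:ℝ)/8 ≤ min x 1 := le_min hcase (by norm_num)
      exact le_trans this hz.1
    have hmvt := Convex.norm_image_sub_le_of_norm_hasDerivWithin_le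
      (f := fun s => stdPhi (w/(σp*Real.sqrt s))) (f' := Fderiv w σp) (C := 1)
      (fun z hz => (F_hasDerivAt w σp hσp
        (lt_of_lt_of_le (by norm_num) (hsub hz))).hasDerivWithinAt)
      (fun z hz => by
        rw [Real.norm_eq_abs]; exact Fderiv_abs_le w σp hσp (hsub hz))
      (convex_Icc _ _)
      (Set.mem_Icc.mpr ⟨min_le_right _ _, le_max_right _ _⟩)
      (Set.mem_Icc.mpr ⟨min_le_left _ _, le_max_left _ _⟩)
    rw [Real.norm_eq_abs, Real.norm_eq_abs, one_mul] at hmvt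
    have hx : σp * Real.sqrt x = σq := by
      rw [hxdef, ← div_pow, Real.sqrt_sq (le_of_lt (div_pos hσq hσp))]
      field_simp
    simp only [Real.sqrt_one, mul_one, hx] at hmvt
    calc |stdPhi (w/σp) - stdPhi (w/σq)|
        = |stdPhi (w/σq) - stdPhi (w/σp)| := abs_sub_comm _ _
      _ ≤ |x - 1| := hmvt
      _ = |1 - x| := abs_sub_comm _ _
  · -- crude case
    push_neg at hcase
    have hhalf : |stdPhi (w/σp) - stdPhi (w/σq)| ≤ 1/2 := by
      rcases le_or_gt 0 w with hw | hw
      · exact abs_stdPhi_sub_le_half (Or.inl ⟨by positivity, by positivity⟩)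
      · refine abs_stdPhi_sub_le_half (Or.inr ⟨?_, ?_⟩) <;>
          exact le_of_lt (div_neg_of_neg_of_pos hw (by positivity))
    have : (1:ℝ)/2 ≤ |1 - x| := by
      rw [abs_of_nonneg (by linarith)]
      linarith
    linarith
end
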